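/- Given an array (b_{i,0}, b_{i,1})_{i<ω} such that: the rows (b̄_i)_{i<ω} form an indiscernible sequence, {φ(x;b_{i,0}) : i<ω} is consistent, {φ(x;b_{i,1}) : i<ω} is 2-inconsistent, and b_{i,0} ≡_{b̄_{<i}} b_{i,1} for all i; define c_{i,0} = b_{2i+1,0} and c_{i,1} = b_{2i,1}. Then the new array (c_{i,0}, c_{i,1})_{i<ω} satisfies: {φ(x;c_{i,0}) : i<ω} is consistent, {φ(x;c_{i,1}) : i<ω} is 2-inconsistent, (c̄_i)_{i<ω} is an indiscernible sequence, c_{i,0} ≡_{c̄_{<i}} c_{i,1} for all i, and for each i the sequence (c_{k,0})_{k≥i} is indiscernible over c̄_{<i} ∪ {c_{i,1}}. -/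
import Mathlib


open FirstOrder Language

universe u v w

variable {L : FirstOrder.Language.{u, v}}

/-- Tuples `a, b : γ → M` have the same type over the parameter set `A ⊆ M`. -/
def SameTypeOver {M : Type w} [L.Structure M] {γ : Type*} (A : Set M)
    (a b : γ → M) : Prop :=
  ∀ (n : ℕ) (cpar : Fin n → M), (∀ i, cpar i ∈ A) →
    ∀ φ : L.Formula (γ ⊕ Fin n),
      φ.Realize (Sum.elim a cpar) ↔ φ.Realize (Sum.elim b cpar)

/-- The sequence of tuples `(c i)_{i<ω}` is indiscernible over the set `A`. -/
def IndiscernibleOver {M : Type w} [L.Structure M] {γ : Type*} (A : Set M)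
    (c : ℕ → γ → M) : Prop :=
  ∀ (n : ℕ) (s t : Fin n → ℕ), StrictMono s → StrictMono t →
    SameTypeOver (L := L) A (fun p : Fin n × γ => c (s p.1) p.2)
      (fun p : Fin n × γ => c (t p.1) p.2)

/-- The formula `φ(x; y)` witnesses SOP₁ in `M` (the monster model), via the tree
definition: a binary tree of parameter tuples whose branches are consistent
(realized), with the characteristic SOP₁ inconsistency condition. -/
def SOP1Formula {α γ : Type*} (M : Type w) [L.Structure M]
    (φ : L.Formula (α ⊕ γ)) : Prop :=
  ∃ a : List Bool → γ → M,
    (∀ η : ℕ → Bool, ∃ x : α → M, ∀ n : ℕ,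
        φ.Realize (Sum.elim x (a (List.ofFn fun i : Fin n => η i)))) ∧
    (∀ ν η : List Bool, (ν ++ [false]) <+: η →
        ¬ ∃ x : α → M, φ.Realize (Sum.elim x (a η)) ∧
            φ.Realize (Sum.elim x (a (ν ++ [true]))))

/-- `M` is a monster model: every type (in countably many variables) over any
parameter set which is finitely realized in `M` is realized in `M`. -/
def MonsterSaturated (M : Type w) [L.Structure M] : Prop :=
  ∀ (β : Type w) (S : Set (L.Formula (ℕ ⊕ β))) (e : β → M),
    (∀ s : Finset (L.Formula (ℕ ⊕ β)), ↑s ⊆ S →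
      ∃ x : ℕ → M, ∀ φ ∈ s, φ.Realize (Sum.elim x e)) →
    ∃ x : ℕ → M, ∀ φ ∈ S, φ.Realize (Sum.elim x e)

/-- The set of elements appearing in the rows `c̄_k` for `k < i` of an array. -/
def rowsLT {M : Type w} {γ : Type*} (c : ℕ → Bool → γ → M) (i : ℕ) : Set M :=
  ⋃ k < i, (Set.range (c k false) ∪ Set.range (c k true))

section Helpers

variable {M : Type w} [L.Structure M]

private lemma sameTypeOver_mono {γ : Type*} {A B : Set M} {a b : γ → M}
    (h : SameTypeOver (L := L) A a b) (hBA : B ⊆ A) : SameTypeOver (L := L) B a b :=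
  fun n cpar hc ψ => h n cpar (fun i => hBA (hc i)) ψ

private lemma sameTypeOver_symm {γ : Type*} {A : Set M} {a b : γ → M}
    (h : SameTypeOver (L := L) A a b) : SameTypeOver (L := L) A b a :=
  fun n cpar hc ψ => (h n cpar hc ψ).symm

private lemma sameTypeOver_trans {γ : Type*} {A : Set M} {a b d : γ → M}
    (h1 : SameTypeOver (L := L) A a b) (h2 : SameTypeOver (L := L) A b d) :
    SameTypeOver (L := L) A a d :=
  fun n cpar hc ψ => (h1 n cpar hc ψ).trans (h2 n cpar hc ψ)

private lemma sameTypeOver_congr {γ : Type*} {A : Set M} {a b a' b' : γ → M}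
    (ha : a = a') (hb : b = b') (h : SameTypeOver (L := L) A a b) :
    SameTypeOver (L := L) A a' b' := ha ▸ hb ▸ h

/-- Pull back a `SameTypeOver ∅` along a relabeling, absorbing parameters that
appear as common coordinates of the two tuples. -/
private lemma sameTypeOver_pull {γ δ : Type*} {A : Set M} {a b : δ → M}
    (h : SameTypeOver (L := L) (∅ : Set M) a b) (r : γ → δ)
    (hA : ∀ x ∈ A, ∃ g, a g = x ∧ b g = x) :
    SameTypeOver (L := L) A (a ∘ r) (b ∘ r) := by
  intro n cpar hc ψ
  choose rep hrep using fun j => hA (cpar j) (hc j)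
  have h0 := h 0 Fin.elim0 (fun i => i.elim0)
    (ψ.relabel (Sum.inl ∘ Sum.elim r rep))
  rw [Formula.realize_relabel, Formula.realize_relabel] at h0
  have e : ∀ d' : δ → M, (∀ j, d' (rep j) = cpar j) →
      Sum.elim d' Fin.elim0 ∘ (Sum.inl ∘ Sum.elim r rep) = Sum.elim (d' ∘ r) cpar := by
    intro d' hd'
    funext x
    cases x with
    | inl g => rfl
    | inr j => exact hd' j
  rw [e a (fun j => (hrep j).1), e b (fun j => (hrep j).2)] at h0
  exact h0

end Helpers

/-- Extend a map `Fin n → ℕ` to `ℕ → ℕ` by zero. -/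
private def ext0 {n : ℕ} (u : Fin n → ℕ) : ℕ → ℕ :=
  fun m => if h : m < n then u ⟨m, h⟩ else 0

private lemma ext0_eq {n : ℕ} (u : Fin n → ℕ) (j : Fin n) : ext0 u j.val = u j := by
  unfold ext0
  rw [dif_pos j.isLt]

private lemma ext0_lt {n : ℕ} {u : Fin n → ℕ} (hu : StrictMono u) {a a' : ℕ}
    (h : a < a') (h' : a' < n) : ext0 u a < ext0 u a' := by
  unfold ext0
  rw [dif_pos (h.trans h'), dif_pos h']
  exact hu (show (⟨a, h.trans h'⟩ : Fin n) < ⟨a', h'⟩ from h)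

/-- proof of Lemma 1.4: from an indiscernible SOP₁-array `b`,
the re-indexed array `c_{i,0} = b_{2i+1,0}`, `c_{i,1} = b_{2i,1}` satisfies the
strengthened conditions (1)-(5). -/
theorem sop1_reindexed_array {M : Type w} [L.Structure M] {α γ : Type*}
    (T : L.Theory) (hT : T.IsComplete) (hM : M ⊨ T)
    (φ : L.Formula (α ⊕ γ)) (b : ℕ → Bool → γ → M)
    (hbind : IndiscernibleOver (L := L) (∅ : Set M)
      (fun i (p : Bool × γ) => b i p.1 p.2))
    (hbcons : ∃ x : α → M, ∀ i, φ.Realize (Sum.elim x (b i false)))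
    (hb2inc : ∀ i j, i ≠ j → ¬ ∃ x : α → M,
      φ.Realize (Sum.elim x (b i true)) ∧ φ.Realize (Sum.elim x (b j true)))
    (hbsame : ∀ i, SameTypeOver (L := L) (rowsLT b i) (b i false) (b i true))
    (c : ℕ → Bool → γ → M)
    (hc0 : ∀ i, c i false = b (2 * i + 1) false)
    (hc1 : ∀ i, c i true = b (2 * i) true) :
    -- (1) {φ(x; c_{i,0}) : i < ω} is consistent
    (∃ x : α → M, ∀ i, φ.Realize (Sum.elim x (c i false))) ∧
    -- (2) {φ(x; c_{i,1}) : i < ω} is 2-inconsistent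
    (∀ i j, i ≠ j → ¬ ∃ x : α → M,
      φ.Realize (Sum.elim x (c i true)) ∧ φ.Realize (Sum.elim x (c j true))) ∧
    -- (3) the sequence of rows (c̄_i) is indiscernible
    IndiscernibleOver (L := L) (∅ : Set M) (fun i (p : Bool × γ) => c i p.1 p.2) ∧
    -- (4) c_{i,0} ≡_{c̄_{<i}} c_{i,1}
    (∀ i, SameTypeOver (L := L) (rowsLT c i) (c i false) (c i true)) ∧
    -- (5) (c_{k,0})_{k ≥ i} is indiscernible over c̄_{<i} ∪ {c_{i,1}}
    (∀ i, IndiscernibleOver (L := L) (rowsLT c i ∪ Set.range (c i true))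
      (fun k => c (i + k) false)) := by
  refine ⟨?_, ?_, ?_, ?_, ?_⟩
  -- (1) consistency
  · obtain ⟨x, hx⟩ := hbcons
    refine ⟨x, fun i => ?_⟩
    rw [hc0]
    exact hx _
  -- (2) 2-inconsistency
  · rintro i j hij ⟨x, h1, h2⟩
    rw [hc1] at h1 h2
    exact hb2inc (2*i) (2*j) (by omega) ⟨x, h1, h2⟩
  -- (3) indiscernibility of the rows
  · intro n s t hs ht
    have mono : ∀ u : Fin n → ℕ, StrictMono u →
        StrictMono (fun k : Fin (2*n) => 2 * ext0 u (k.val / 2) + k.val % 2) := by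
      intro u hu k l hkl
      have hv : k.val < l.val := hkl
      have hk := k.isLt
      have hl := l.isLt
      show 2 * ext0 u (k.val / 2) + k.val % 2 < 2 * ext0 u (l.val / 2) + l.val % 2
      rcases Nat.eq_or_lt_of_le (show k.val / 2 ≤ l.val / 2 by omega) with he | hlt
      · rw [he]; omega
      · have := ext0_lt hu hlt (by omega)
        omega
    have etup : ∀ u : Fin n → ℕ,
        ((fun p : Fin (2*n) × (Bool × γ) =>
            b (2 * ext0 u (p.1.val / 2) + p.1.val % 2) p.2.1 p.2.2) ∘
          (fun p : Fin n × (Bool × γ) =>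
            ((⟨2 * p.1.val + (if p.2.1 then 0 else 1), by have := p.1.isLt; split <;> omega⟩ :
                Fin (2*n)), p.2)))
        = fun p : Fin n × (Bool × γ) => c (u p.1) p.2.1 p.2.2 := by
      intro u
      funext p
      obtain ⟨j, bb, g⟩ := p
      cases bb
      · show b (2 * ext0 u ((2*j.val + 1) / 2) + (2*j.val + 1) % 2) false g
          = c (u j) false g
        rw [show (2*j.val + 1) / 2 = j.val from by omega,
            show (2*j.val + 1) % 2 = 1 from by omega, ext0_eq, hc0]
      · show b (2 * ext0 u ((2*j.val + 0) / 2) + (2*j.val + 0) % 2) true g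
          = c (u j) true g
        rw [show (2*j.val + 0) / 2 = j.val from by omega,
            show (2*j.val + 0) % 2 = 0 from by omega, Nat.add_zero, ext0_eq, hc1]
    have H := sameTypeOver_pull (L := L) (A := (∅ : Set M))
      (hbind (2*n) _ _ (mono s hs) (mono t ht))
      (fun p : Fin n × (Bool × γ) =>
        ((⟨2 * p.1.val + (if p.2.1 then 0 else 1), by have := p.1.isLt; split <;> omega⟩ :
            Fin (2*n)), p.2))
      (fun x hx => absurd hx (Set.notMem_empty x))
    exact sameTypeOver_congr (etup s) (etup t) H
  -- (4) same type over earlier rows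
  · intro i
    have hsub : rowsLT c i ⊆ rowsLT b (2*i+1) := by
      intro x hx
      simp only [rowsLT, Set.mem_iUnion, Set.mem_union, Set.mem_range] at hx ⊢
      obtain ⟨k, hk, hx⟩ := hx
      rcases hx with ⟨g, hg⟩ | ⟨g, hg⟩
      · rw [hc0] at hg
        exact ⟨2*k+1, by omega, Or.inl ⟨g, hg⟩⟩
      · rw [hc1] at hg
        exact ⟨2*k, by omega, Or.inr ⟨g, hg⟩⟩
    have H1 : SameTypeOver (L := L) (rowsLT c i) (b (2*i+1) false) (b (2*i+1) true) :=
      sameTypeOver_mono (hbsame (2*i+1)) hsub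
    have smono : StrictMono (fun k : Fin (2*i+1) => k.val) := fun k l h => h
    have tmono : StrictMono
        (fun k : Fin (2*i+1) => if k.val = 2*i then 2*i+1 else k.val) := by
      intro k l hkl
      have hv : k.val < l.val := hkl
      have hk := k.isLt
      have hl := l.isLt
      show (if k.val = 2*i then 2*i+1 else k.val)
        < (if l.val = 2*i then 2*i+1 else l.val)
      split_ifs <;> omega
    have hrep : ∀ x ∈ rowsLT c i, ∃ p : Fin (2*i+1) × (Bool × γ),
        b p.1.val p.2.1 p.2.2 = x ∧
        b (if p.1.val = 2*i then 2*i+1 else p.1.val) p.2.1 p.2.2 = x := by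
      intro x hx
      simp only [rowsLT, Set.mem_iUnion, Set.mem_union, Set.mem_range] at hx
      obtain ⟨k, hk, hx⟩ := hx
      rcases hx with ⟨g, hg⟩ | ⟨g, hg⟩
      · rw [hc0] at hg
        refine ⟨((⟨2*k+1, by omega⟩ : Fin (2*i+1)), (false, g)), hg, ?_⟩
        show b (if 2*k+1 = 2*i then 2*i+1 else 2*k+1) false g = x
        rw [if_neg (by omega)]
        exact hg
      · rw [hc1] at hg
        refine ⟨((⟨2*k, by omega⟩ : Fin (2*i+1)), (true, g)), hg, ?_⟩
        show b (if 2*k = 2*i then 2*i+1 else 2*k) true g = x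
        rw [if_neg (by omega)]
        exact hg
    have H2 := sameTypeOver_pull (L := L) (A := rowsLT c i)
      (hbind (2*i+1) _ _ smono tmono)
      (fun g : γ => ((⟨2*i, by omega⟩ : Fin (2*i+1)), (true, g)))
      hrep
    have Ha : ((fun p : Fin (2*i+1) × (Bool × γ) => b p.1.val p.2.1 p.2.2) ∘
        (fun g : γ => ((⟨2*i, by omega⟩ : Fin (2*i+1)), (true, g)))) = c i true := by
      funext g
      show b (2*i) true g = c i true g
      rw [hc1]
    have Hb : ((fun p : Fin (2*i+1) × (Bool × γ) =>
          b (if p.1.val = 2*i then 2*i+1 else p.1.val) p.2.1 p.2.2) ∘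
        (fun g : γ => ((⟨2*i, by omega⟩ : Fin (2*i+1)), (true, g))))
        = b (2*i+1) true := by
      funext g
      show b (if 2*i = 2*i then 2*i+1 else 2*i) true g = b (2*i+1) true g
      rw [if_pos rfl]
    have H2' := sameTypeOver_congr Ha Hb H2
    rw [hc0]
    exact sameTypeOver_trans H1 (sameTypeOver_symm H2')
  -- (5) indiscernibility over earlier rows and c_{i,1}
  · intro i n s t hs ht
    have mono : ∀ u : Fin n → ℕ, StrictMono u →
        StrictMono (fun k : Fin (2*i+1+n) =>
          if k.val < 2*i+1 then k.val else 2*(i + ext0 u (k.val - (2*i+1)))+1) := by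
      intro u hu k l hkl
      have hv : k.val < l.val := hkl
      have hk := k.isLt
      have hl := l.isLt
      show (if k.val < 2*i+1 then k.val else 2*(i + ext0 u (k.val - (2*i+1)))+1)
        < (if l.val < 2*i+1 then l.val else 2*(i + ext0 u (l.val - (2*i+1)))+1)
      split_ifs with h1 h2 h2
      · omega
      · omega
      · omega
      · have := ext0_lt hu (show k.val - (2*i+1) < l.val - (2*i+1) from by omega)
          (show l.val - (2*i+1) < n from by omega)
        omega
    have hrep : ∀ x ∈ rowsLT c i ∪ Set.range (c i true),
        ∃ p : Fin (2*i+1+n) × (Bool × γ),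
          b (if p.1.val < 2*i+1 then p.1.val
              else 2*(i + ext0 s (p.1.val - (2*i+1)))+1) p.2.1 p.2.2 = x ∧
          b (if p.1.val < 2*i+1 then p.1.val
              else 2*(i + ext0 t (p.1.val - (2*i+1)))+1) p.2.1 p.2.2 = x := by
      intro x hx
      rcases hx with hx | hx
      · simp only [rowsLT, Set.mem_iUnion, Set.mem_union, Set.mem_range] at hx
        obtain ⟨k, hk, hx⟩ := hx
        rcases hx with ⟨g, hg⟩ | ⟨g, hg⟩
        · rw [hc0] at hg
          refine ⟨((⟨2*k+1, by omega⟩ : Fin (2*i+1+n)), (false, g)), ?_, ?_⟩ <;>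
          · show b (if 2*k+1 < 2*i+1 then 2*k+1 else _) false g = x
            rw [if_pos (by omega)]
            exact hg
        · rw [hc1] at hg
          refine ⟨((⟨2*k, by omega⟩ : Fin (2*i+1+n)), (true, g)), ?_, ?_⟩ <;>
          · show b (if 2*k < 2*i+1 then 2*k else _) true g = x
            rw [if_pos (by omega)]
            exact hg
      · obtain ⟨g, hg⟩ := hx
        rw [hc1] at hg
        refine ⟨((⟨2*i, by omega⟩ : Fin (2*i+1+n)), (true, g)), ?_, ?_⟩ <;>
        · show b (if 2*i < 2*i+1 then 2*i else _) true g = x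
          rw [if_pos (by omega)]
          exact hg
    have etup : ∀ u : Fin n → ℕ,
        ((fun p : Fin (2*i+1+n) × (Bool × γ) =>
            b (if p.1.val < 2*i+1 then p.1.val
                else 2*(i + ext0 u (p.1.val - (2*i+1)))+1) p.2.1 p.2.2) ∘
          (fun p : Fin n × γ =>
            ((⟨2*i+1+p.1.val, by have := p.1.isLt; omega⟩ : Fin (2*i+1+n)),
              (false, p.2))))
        = fun p : Fin n × γ => c (i + u p.1) false p.2 := by
      intro u
      funext p
      obtain ⟨j, g⟩ := p
      show b (if 2*i+1+j.val < 2*i+1 then 2*i+1+j.val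
          else 2*(i + ext0 u (2*i+1+j.val - (2*i+1)))+1) false g = c (i + u j) false g
      rw [if_neg (by omega), show 2*i+1+j.val - (2*i+1) = j.val from by omega,
        ext0_eq, hc0]
    have H := sameTypeOver_pull (L := L) (A := rowsLT c i ∪ Set.range (c i true))
      (hbind (2*i+1+n) _ _ (mono s hs) (mono t ht))
      (fun p : Fin n × γ =>
        ((⟨2*i+1+p.1.val, by have := p.1.isLt; omega⟩ : Fin (2*i+1+n)),
          (false, p.2)))
      hrep
    exact sameTypeOver_congr (etup s) (etup t) H
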